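/- arXiv:cs/0610103 — 6 statements merged into one kernel-verified Lean document; each statement's English description precedes it below -/
import Mathlib

section
/- The function P ↦ log(1 + h_M·P) − log(1 + h_E·P) is concave in P on [0,∞) whenever h_M ≥ h_E ≥ 0. -/
private lemma aff_pos {c x : ℝ} (hc : 0 ≤ c) (hx : 0 ≤ x) : 0 < 1 + c * x := by
  nlinarith

private lemma hasDerivAt_aff (c x : ℝ) : HasDerivAt (fun P : ℝ => 1 + c * P) c x := by
  simpa using ((hasDerivAt_id x).const_mul c).const_add 1

private lemma hasDerivAt_log_aff {c x : ℝ} (h : (0:ℝ) < 1 + c * x) :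
    HasDerivAt (fun P : ℝ => Real.log (1 + c * P)) (c / (1 + c * x)) x :=
  (hasDerivAt_aff c x).log h.ne'

private lemma hasDerivAt_ratio {c x : ℝ} (h : (0:ℝ) < 1 + c * x) :
    HasDerivAt (fun P : ℝ => c / (1 + c * P))
      ((0 * (1 + c * x) - c * c) / (1 + c * x) ^ 2) x :=
  (hasDerivAt_const x c).div (hasDerivAt_aff c x) h.ne'

/-- The instantaneous secrecy rate `P ↦ log(1 + h_M·P) − log(1 + h_E·P)` is concave
in the power `P` on `[0,∞)` whenever `h_M ≥ h_E ≥ 0`. -/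
theorem secrecy_rate_concave (hM hE : ℝ) (hE_nonneg : 0 ≤ hE) (h_le : hE ≤ hM) :
    ConcaveOn ℝ (Set.Ici (0 : ℝ))
      (fun P => Real.log (1 + hM * P) - Real.log (1 + hE * P)) := by
  have hM_nonneg : 0 ≤ hM := hE_nonneg.trans h_le
  have hintr : interior (Set.Ici (0:ℝ)) = Set.Ioi 0 := interior_Ici
  refine concaveOn_of_hasDerivWithinAt2_nonpos (f' := fun x => hM / (1 + hM * x) - hE / (1 + hE * x))
    (f'' := fun x => (0 * (1 + hM * x) - hM * hM) / (1 + hM * x) ^ 2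
      - (0 * (1 + hE * x) - hE * hE) / (1 + hE * x) ^ 2)
    (convex_Ici 0) ?_ ?_ ?_ ?_
  · apply ContinuousOn.sub
    · exact (Real.continuousOn_log.comp (by fun_prop)
        (fun x hx => (aff_pos hM_nonneg hx).ne'))
    · exact (Real.continuousOn_log.comp (by fun_prop)
        (fun x hx => (aff_pos hE_nonneg hx).ne'))
  · intro x hx
    rw [hintr] at hx
    exact (((hasDerivAt_log_aff (aff_pos hM_nonneg hx.le)).sub
      (hasDerivAt_log_aff (aff_pos hE_nonneg hx.le))).hasDerivWithinAt)
  · intro x hx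
    rw [hintr] at hx
    exact (((hasDerivAt_ratio (aff_pos hM_nonneg hx.le)).sub
      (hasDerivAt_ratio (aff_pos hE_nonneg hx.le))).hasDerivWithinAt)
  · intro x hx
    rw [hintr] at hx
    have hx' : 0 ≤ x := hx.le
    have h1 : (0:ℝ) < 1 + hE * x := aff_pos hE_nonneg hx'
    have h2 : (0:ℝ) < 1 + hM * x := aff_pos hM_nonneg hx'
    have key : hE / (1 + hE * x) ≤ hM / (1 + hM * x) := by
      rw [div_le_div_iff₀ h1 h2]
      nlinarith
    have hEnn : 0 ≤ hE / (1 + hE * x) := div_nonneg hE_nonneg h1.le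
    have sq : (hE / (1 + hE * x))^2 ≤ (hM / (1 + hM * x))^2 := by
      exact pow_le_pow_left₀ hEnn key 2
    have e1 : (0 * (1 + hM * x) - hM * hM) / (1 + hM * x) ^ 2 = -((hM / (1 + hM * x))^2) := by
      field_simp; ring
    have e2 : (0 * (1 + hE * x) - hE * hE) / (1 + hE * x) ^ 2 = -((hE / (1 + hE * x))^2) := by
      field_simp; ring
    rw [e1, e2]
    linarith
end

section
/- The derivative of P ↦ log(1+h_M·P) − log(1+h_E·P) at P = 0 equals h_M − h_E, and if h_M − h_E ≤ λ then log(1+h_M·P) − log(1+h_E·P) − λ·P ≤ 0 for all P ≥ 0, so the optimal power allocation is P = 0. -/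
/-- The derivative of `P ↦ log(1+h_M P) − log(1+h_E P)` at `P = 0` equals `h_M − h_E`,
and if `h_M − h_E ≤ λ` then `log(1+h_M P) − log(1+h_E P) − λP ≤ 0` for all `P ≥ 0`,
so the optimal power allocation is `P = 0`. -/
theorem zero_power_threshold (hM hE lam : ℝ) (hE_pos : 0 < hE) (h_lt : hE < hM)
    (hlam : 0 < lam) :
    HasDerivAt (fun P => Real.log (1 + hM * P) - Real.log (1 + hE * P))
      (hM - hE) 0 ∧
    (hM - hE ≤ lam → ∀ P : ℝ, 0 ≤ P →
      Real.log (1 + hM * P) - Real.log (1 + hE * P) - lam * P ≤ 0) := by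
  constructor
  · have h1 : HasDerivAt (fun P : ℝ => 1 + hM * P) hM 0 :=
      by simpa using ((hasDerivAt_id 0).const_mul hM).const_add 1
    have h2 : HasDerivAt (fun P : ℝ => 1 + hE * P) hE 0 :=
      by simpa using ((hasDerivAt_id 0).const_mul hE).const_add 1
    have l1 := (h1.log (by norm_num))
    have l2 := (h2.log (by norm_num))
    exact (l1.sub l2).congr_deriv (by simp)
  · intro hle P hP
    have hMpos : (0:ℝ) < 1 + hM * P := by nlinarith
    have hEposP : (0:ℝ) < 1 + hE * P := by nlinarith
    have key : Real.log (1 + hM * P) - Real.log (1 + hE * P) ≤ (hM - hE) * P := by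
      rw [← Real.log_div (ne_of_gt hMpos) (ne_of_gt hEposP)]
      have h3 := Real.log_le_sub_one_of_pos (div_pos hMpos hEposP)
      have h4 : (1 + hM * P) / (1 + hE * P) - 1 ≤ (hM - hE) * P := by
        rw [div_sub_one (ne_of_gt hEposP), div_le_iff₀ hEposP]
        nlinarith [mul_nonneg (mul_nonneg (sub_pos.mpr h_lt).le hP) (mul_nonneg hE_pos.le hP)]
      linarith
    nlinarith
end

section
/- If h is a random variable with exponential distribution of mean γ̄ > 0 and P > 0, then E[log(1 + h·P)] = exp(1/(γ̄·P))·Ei(1/(γ̄·P)), where Ei(x) = ∫_x^∞ e^{−t}/t dt. -/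
open MeasureTheory ProbabilityTheory Real Set Filter
open scoped Topology ENNReal NNReal

/-- The exponential integral `Ei(x) = ∫_x^∞ e^{−t}/t dt` for `x > 0`. -/
noncomputable def Ei (x : ℝ) : ℝ := ∫ t in Set.Ioi x, Real.exp (-t) / t

lemma Ei_integrableOn {a : ℝ} (ha : 0 < a) :
    IntegrableOn (fun t => Real.exp (-t) / t) (Set.Ioi a) := by
  apply integrable_of_isBigO_exp_neg (b := 1) one_pos
  · intro x hx
    exact ((Real.continuous_exp.comp continuous_neg).continuousAt.div continuousAt_id
      (lt_of_lt_of_le ha hx).ne').continuousWithinAt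
  · apply Asymptotics.IsBigO.of_bound (1 / a)
    filter_upwards [eventually_ge_atTop a] with t ht
    have htpos : 0 < t := lt_of_lt_of_le ha ht
    have h1 : ‖Real.exp (-t) / t‖ = Real.exp (-t) / t := by
      rw [Real.norm_eq_abs, abs_of_pos (div_pos (Real.exp_pos _) htpos)]
    have h2 : ‖Real.exp (-1 * t)‖ = Real.exp (-t) := by
      rw [Real.norm_eq_abs, abs_of_pos (Real.exp_pos _), neg_one_mul]
    rw [h1, h2]
    calc Real.exp (-t) / t ≤ Real.exp (-t) / a := by
          gcongr
      _ = 1 / a * Real.exp (-t) := by ring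

lemma Ei_sub_of_le {c y : ℝ} (hc : 0 < c) (h : c ≤ y) :
    Ei c = (∫ t in Set.Ioc c y, Real.exp (-t) / t) + Ei y := by
  have hy : 0 < y := hc.trans_le h
  rw [Ei, Ei, ← setIntegral_union (Set.Ioc_disjoint_Ioi le_rfl) measurableSet_Ioi
      ((Ei_integrableOn hc).mono_set Set.Ioc_subset_Ioi_self) (Ei_integrableOn hy),
    Set.Ioc_union_Ioi_eq_Ioi h]

lemma Ei_sub {c y : ℝ} (hc : 0 < c) (hy : 0 < y) :
    Ei y = Ei c - ∫ t in c..y, Real.exp (-t) / t := by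
  rcases le_total c y with h | h
  · rw [intervalIntegral.integral_of_le h]
    have := Ei_sub_of_le hc h
    linarith
  · rw [intervalIntegral.integral_symm, intervalIntegral.integral_of_le h]
    have := Ei_sub_of_le hy h
    linarith

lemma hasDerivAt_Ei {y : ℝ} (hy : 0 < y) : HasDerivAt Ei (-(Real.exp (-y) / y)) y := by
  have hc : 0 < y / 2 := by linarith
  have hmeas : Measurable fun t : ℝ => Real.exp (-t) / t :=
    (Real.measurable_exp.comp measurable_neg).div measurable_id
  have hint : IntervalIntegrable (fun t => Real.exp (-t) / t) volume (y / 2) y := by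
    apply MeasureTheory.IntegrableOn.intervalIntegrable
    apply (Ei_integrableOn (show (0:ℝ) < y/4 by linarith)).mono_set
    intro t ht
    rcases Set.mem_uIcc.1 ht with h | h
    · exact Set.mem_Ioi.2 (by linarith [h.1])
    · exact Set.mem_Ioi.2 (by linarith [h.1])
  have hco : ContinuousAt (fun t : ℝ => Real.exp (-t) / t) y :=
    (Real.continuous_exp.comp continuous_neg).continuousAt.div continuousAt_id hy.ne'
  have hF : HasDerivAt (fun z => Ei (y / 2) - ∫ t in (y/2)..z, Real.exp (-t) / t)
      (-(Real.exp (-y) / y)) y := by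
    have := intervalIntegral.integral_hasDerivAt_right hint
      ⟨Set.univ, Filter.univ_mem, hmeas.aestronglyMeasurable⟩ hco
    exact ((hasDerivAt_const y (Ei (y/2))).sub this).congr_deriv (by simp)
  apply hF.congr_of_eventuallyEq
  filter_upwards [IsOpen.mem_nhds isOpen_Ioi (Set.mem_Ioi.2 hy)] with z hz
  exact Ei_sub hc hz

lemma tendsto_Ei_atTop : Tendsto Ei atTop (𝓝 0) := by
  have h1 := intervalIntegral_tendsto_integral_Ioi 1 (Ei_integrableOn one_pos) tendsto_id
  have h2 : Tendsto (fun y => Ei 1 - ∫ t in (1:ℝ)..y, Real.exp (-t) / t) atTop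
      (𝓝 (Ei 1 - Ei 1)) := tendsto_const_nhds.sub h1
  rw [sub_self] at h2
  apply h2.congr'
  filter_upwards [eventually_gt_atTop (0:ℝ)] with y hy
  exact (Ei_sub one_pos hy).symm

lemma tendsto_mul_exp_neg_atTop {c : ℝ} (hc : 0 < c) :
    Tendsto (fun x : ℝ => x * Real.exp (-(c * x))) atTop (𝓝 0) := by
  have h1 := (Real.tendsto_pow_mul_exp_neg_atTop_nhds_zero 1).comp
    (tendsto_id.const_mul_atTop hc)
  have h2 : Tendsto (fun x : ℝ => (1/c) * ((c * x) ^ 1 * Real.exp (-(c * x)))) atTop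
      (𝓝 ((1/c) * 0)) := h1.const_mul _
  rw [mul_zero] at h2
  apply h2.congr
  intro x
  field_simp

/-- If `h` is a random variable with exponential distribution of mean `γ̄ > 0`
(i.e. rate `1/γ̄`) and `P > 0`, then `E[log(1 + h·P)] = e^{1/(γ̄P)}·Ei(1/(γ̄P))`. -/
theorem expectation_log_exponential {Ω : Type*} [MeasureSpace Ω]
    (h : Ω → ℝ) (γ P : ℝ) (hγ : 0 < γ) (hP : 0 < P)
    (hlaw : Measure.map h ℙ = expMeasure (1/γ)) :
    ∫ ω, Real.log (1 + h ω * P) = Real.exp (1/(γ*P)) * Ei (1/(γ*P)) := by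
  set r : ℝ := 1/γ with hr_def
  have hr : 0 < r := by positivity
  set a : ℝ := 1/(γ*P) with ha_def
  have ha : 0 < a := by positivity
  have har : a = r/P := by rw [ha_def, hr_def]; field_simp
  have hglog : Measurable fun x : ℝ => Real.log (1 + x * P) :=
    Real.measurable_log.comp ((measurable_id.mul_const P).const_add 1)
  have hmeash : AEMeasurable h ℙ := by
    by_contra hc
    rw [Measure.map_of_not_aemeasurable hc] at hlaw
    have hprob : IsProbabilityMeasure (expMeasure r) := isProbabilityMeasure_expMeasure hr
    have h1 := hprob.measure_univ
    rw [← hlaw] at h1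
    simp at h1
  have step1 : ∫ ω, Real.log (1 + h ω * P)
      = ∫ x, Real.log (1 + x * P) ∂(Measure.map h ℙ) :=
    (integral_map hmeash hglog.aestronglyMeasurable).symm
  rw [hlaw] at step1
  have hfmeas : Measurable fun x => (exponentialPDFReal r x).toNNReal :=
    (measurable_exponentialPDFReal r).real_toNNReal
  have hwd : expMeasure r
      = volume.withDensity fun x => ((exponentialPDFReal r x).toNNReal : ℝ≥0∞) := by
    simp only [expMeasure, gammaMeasure]
    congr 1
  have step2 : ∫ x, Real.log (1 + x * P) ∂(expMeasure r)
      = ∫ x, exponentialPDFReal r x * Real.log (1 + x * P) := by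
    rw [hwd, integral_withDensity_eq_integral_smul hfmeas]
    congr 1; funext x
    rw [NNReal.smul_def, Real.coe_toNNReal _ (exponentialPDFReal_nonneg hr x), smul_eq_mul]
  have step3 : ∫ x, exponentialPDFReal r x * Real.log (1 + x * P)
      = ∫ x in Set.Ioi 0, r * Real.exp (-(r * x)) * Real.log (1 + x * P) := by
    rw [← setIntegral_eq_integral_of_forall_compl_eq_zero (s := Set.Ioi (0:ℝ)) ?_]
    · apply setIntegral_congr_fun measurableSet_Ioi
      intro x hx
      simp [exponentialPDFReal, gammaPDFReal, le_of_lt (Set.mem_Ioi.1 hx), Real.Gamma_one]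
    · intro x hx
      simp only [Set.mem_Ioi, not_lt] at hx
      rcases lt_or_eq_of_le hx with h' | h'
      · simp [exponentialPDFReal, gammaPDFReal, not_le.2 h']
      · simp [h']
  have hpos : ∀ x : ℝ, 0 ≤ x → (0:ℝ) < 1 + x*P := fun x hx => by nlinarith
  have hax : ∀ x : ℝ, 0 ≤ x → 0 < a + r*x := fun x hx => by nlinarith [mul_nonneg hr.le hx]
  set g : ℝ → ℝ := fun x => Real.exp (-(r*x)) * Real.log (1+x*P) + Real.exp a * Ei (a + r*x)
    with hg_def
  have hderiv : ∀ x ∈ Set.Ioi (0:ℝ),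
      HasDerivAt g (-(r * Real.exp (-(r * x)) * Real.log (1 + x * P))) x := by
    intro x hx
    have hx0 : (0:ℝ) ≤ x := le_of_lt hx
    have d1 : HasDerivAt (fun x : ℝ => Real.exp (-(r*x))) (-r * Real.exp (-(r*x))) x := by
      have hi : HasDerivAt (fun x : ℝ => -(r*x)) (-r) x := by
        exact ((hasDerivAt_id x).const_mul r).neg.congr_deriv (by simp)
      simpa [mul_comm] using hi.exp
    have d2 : HasDerivAt (fun x : ℝ => Real.log (1+x*P)) (P/(1+x*P)) x := by
      have hi : HasDerivAt (fun x : ℝ => 1+x*P) P x := by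
        simpa using ((hasDerivAt_id x).mul_const P).const_add 1
      simpa using hi.log (hpos x hx0).ne'
    have d3 : HasDerivAt (fun x : ℝ => Ei (a + r*x))
        (-(Real.exp (-(a+r*x))/(a+r*x)) * r) x := by
      have hi : HasDerivAt (fun x : ℝ => a + r*x) r x := by
        simpa using ((hasDerivAt_id x).const_mul r).const_add a
      exact (hasDerivAt_Ei (hax x hx0)).comp x hi
    have hcomb := (d1.mul d2).add (d3.const_mul (Real.exp a))
    refine hcomb.congr_deriv ?_
    have hkey : a + r*x = r*(1+x*P)/P := by rw [har]; field_simp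
    have hE : Real.exp a * Real.exp (-(a+r*x)) = Real.exp (-(r*x)) := by
      rw [← Real.exp_add]; ring_nf
    have hA : r / (a + r*x) = P / (1+x*P) := by
      rw [div_eq_div_iff (hax x hx0).ne' (hpos x hx0).ne', hkey]
      field_simp
    have h5 : Real.exp a * (-(Real.exp (-(a+r*x))/(a+r*x)) * r)
        = -(Real.exp (-(r*x)) * (P/(1+x*P))) := by
      calc Real.exp a * (-(Real.exp (-(a+r*x))/(a+r*x)) * r)
          = -((Real.exp a * Real.exp (-(a+r*x))) * (r/(a+r*x))) := by ring
        _ = -(Real.exp (-(r*x)) * (P/(1+x*P))) := by rw [hE, hA]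
    rw [h5]; ring
  have hcont : ContinuousWithinAt g (Set.Ici 0) 0 := by
    have c1 : ContinuousAt (fun x : ℝ => Real.exp (-(r*x))) 0 :=
      (Real.continuous_exp.comp ((continuous_const.mul continuous_id).neg)).continuousAt
    have c2 : ContinuousAt (fun x : ℝ => Real.log (1+x*P)) 0 := by
      apply ContinuousAt.log
      · exact (continuous_const.add (continuous_id.mul continuous_const)).continuousAt
      · norm_num
    have c3 : ContinuousAt (fun x : ℝ => Ei (a + r*x)) 0 := by
      have he := (hasDerivAt_Ei (show 0 < a + r*0 by simpa using ha)).continuousAt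
      have ci : ContinuousAt (fun x : ℝ => a + r*x) 0 :=
        (continuous_const.add (continuous_const.mul continuous_id)).continuousAt
      exact ContinuousAt.comp (f := fun x : ℝ => a + r*x) he ci
    exact ((c1.mul c2).add (continuousAt_const.mul c3)).continuousWithinAt
  have hint : IntegrableOn (fun x => -(r * Real.exp (-(r * x)) * Real.log (1 + x * P)))
      (Set.Ioi 0) := by
    apply Integrable.neg
    apply integrable_of_isBigO_exp_neg (b := r/2) (by positivity)
    · intro x hx
      have hx0 : (0:ℝ) ≤ x := hx
      have c1 : ContinuousAt (fun x : ℝ => r * Real.exp (-(r*x))) x :=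
        (continuous_const.mul
          (Real.continuous_exp.comp ((continuous_const.mul continuous_id).neg))).continuousAt
      have c2 : ContinuousAt (fun x : ℝ => Real.log (1+x*P)) x := by
        apply ContinuousAt.log
        · exact (continuous_const.add (continuous_id.mul continuous_const)).continuousAt
        · exact (hpos x hx0).ne'
      exact (c1.mul c2).continuousWithinAt
    · apply Asymptotics.IsBigO.of_bound (r*P)
      have hev := (tendsto_mul_exp_neg_atTop (show (0:ℝ) < r/2 by positivity)).eventually
        (eventually_le_nhds one_pos)
      filter_upwards [hev, eventually_ge_atTop (0:ℝ)] with x hx1 hx0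
      have hLnn : 0 ≤ Real.log (1+x*P) := Real.log_nonneg (by nlinarith)
      have hLle : Real.log (1+x*P) ≤ x*P := by
        have := Real.log_le_sub_one_of_pos (hpos x hx0)
        linarith
      have hsplit : Real.exp (-(r*x)) = Real.exp (-(r/2)*x) * Real.exp (-(r/2)*x) := by
        rw [← Real.exp_add]; ring_nf
      have hxe : x * Real.exp (-(r/2*x)) ≤ 1 := hx1
      have hxe' : x * Real.exp (-(r/2)*x) ≤ 1 := by
        convert hxe using 3; ring
      rw [Real.norm_eq_abs, Real.norm_eq_abs, abs_of_pos (Real.exp_pos _),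
        abs_of_nonneg (by positivity)]
      rw [hsplit]
      calc r * (Real.exp (-(r/2)*x) * Real.exp (-(r/2)*x)) * Real.log (1+x*P)
          ≤ r * (Real.exp (-(r/2)*x) * Real.exp (-(r/2)*x)) * (x*P) := by
            gcongr
        _ = r*P*(x * Real.exp (-(r/2)*x)) * Real.exp (-(r/2)*x) := by ring
        _ ≤ r*P*1*Real.exp (-(r/2)*x) := by gcongr
        _ = r*P*Real.exp (-(r/2)*x) := by ring
  have htend : Tendsto g atTop (𝓝 0) := by
    have t1 : Tendsto (fun x => Real.exp (-(r*x)) * Real.log (1+x*P)) atTop (𝓝 0) := by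
      apply squeeze_zero' (g := fun x => P * (x * Real.exp (-(r*x))))
      · filter_upwards [eventually_ge_atTop (0:ℝ)] with x hx0
        exact mul_nonneg (Real.exp_pos _).le (Real.log_nonneg (by nlinarith))
      · filter_upwards [eventually_ge_atTop (0:ℝ)] with x hx0
        have hLle : Real.log (1+x*P) ≤ x*P := by
          have := Real.log_le_sub_one_of_pos (hpos x hx0)
          linarith
        calc Real.exp (-(r*x)) * Real.log (1+x*P) ≤ Real.exp (-(r*x)) * (x*P) := by
              gcongr
          _ = P * (x * Real.exp (-(r*x))) := by ring
      · simpa using (tendsto_mul_exp_neg_atTop hr).const_mul P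
    have t2 : Tendsto (fun x => Real.exp a * Ei (a + r*x)) atTop (𝓝 (Real.exp a * 0)) := by
      apply Tendsto.const_mul
      exact tendsto_Ei_atTop.comp
        (tendsto_atTop_add_const_left _ a (tendsto_id.const_mul_atTop hr))
    rw [mul_zero] at t2
    simpa using t1.add t2
  have key := integral_Ioi_of_hasDerivAt_of_tendsto hcont hderiv hint htend
  have hg0 : g 0 = Real.exp a * Ei a := by simp [hg_def]
  rw [hg0, integral_neg] at key
  rw [step1, step2, step3]
  linarith
end

section
/- If h_M and h_E are independent exponential random variables with means γ̄_M and γ̄_E, then for every P̄ > 0 the receiver-CSI-only secrecy rate R = E[log(1+h_M·P̄)] − E[log(1+h_E·P̄)] satisfies R > 0 if γ̄_M > γ̄_E and R ≤ 0 if γ̄_M ≤ γ̄_E. Consequently [R]⁺ = 0 whenever γ̄_E ≥ γ̄_M. -/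
open MeasureTheory ProbabilityTheory Real Set

lemma expMeasure_eq_withDensity (r : ℝ) :
    expMeasure r = MeasureTheory.volume.withDensity (exponentialPDF r) := rfl

lemma expMeasure_Iic {r : ℝ} (hr : 0 < r) (x : ℝ) :
    expMeasure r (Iic x) = ENNReal.ofReal (if 0 ≤ x then 1 - rexp (-(r * x)) else 0) := by
  rw [expMeasure_eq_withDensity, withDensity_apply _ measurableSet_Iic,
    lintegral_exponentialPDF_eq_antiDeriv hr]

lemma measurable_expPDF (r : ℝ) : Measurable (exponentialPDF r) :=
  ENNReal.measurable_ofReal.comp (measurable_exponentialPDFReal r)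

lemma map_mul_expMeasure {γ : ℝ} (hγ : 0 < γ) :
    Measure.map (fun y : ℝ => γ * y) (expMeasure 1) = expMeasure (1/γ) := by
  haveI h1 : IsProbabilityMeasure (expMeasure (1:ℝ)) := isProbabilityMeasure_expMeasure one_pos
  haveI h2 : IsProbabilityMeasure (expMeasure (1/γ)) :=
    isProbabilityMeasure_expMeasure (by positivity)
  have hm : Measurable (fun y : ℝ => γ * y) := measurable_const_mul γ
  haveI : IsProbabilityMeasure (Measure.map (fun y : ℝ => γ * y) (expMeasure 1)) :=
    Measure.isProbabilityMeasure_map hm.aemeasurable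
  refine MeasureTheory.Measure.ext_of_Iic _ _ (fun x => ?_)
  rw [Measure.map_apply hm measurableSet_Iic]
  have hpre : (fun y : ℝ => γ * y) ⁻¹' Iic x = Iic (x/γ) := by
    ext y
    simp only [mem_preimage, mem_Iic, le_div_iff₀ hγ]
    constructor <;> intro h <;> linarith [h, mul_comm γ y]
  rw [hpre, expMeasure_Iic one_pos, expMeasure_Iic (by positivity : (0:ℝ) < 1/γ)]
  have hiff : (0 ≤ x/γ) ↔ (0 ≤ x) := by
    rw [le_div_iff₀ hγ, zero_mul]
  have harg : 1 * (x/γ) = 1/γ * x := by field_simp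
  by_cases h : 0 ≤ x
  · rw [if_pos (hiff.mpr h), if_pos h, harg]
  · rw [if_neg (fun hh => h (hiff.mp hh)), if_neg h]

lemma ae_nonneg_expMeasure : ∀ᵐ y ∂(expMeasure (1:ℝ)), 0 ≤ y := by
  rw [ae_iff]
  have : {y : ℝ | ¬ 0 ≤ y} = Iio 0 := by ext y; simp [Set.mem_Iio, not_le]
  rw [this, expMeasure_eq_withDensity, withDensity_apply _ measurableSet_Iio]
  exact lintegral_exponentialPDF_of_nonpos le_rfl

lemma expMeasure_Ioi_zero : expMeasure (1:ℝ) (Ioi 0) = 1 := by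
  haveI h1 : IsProbabilityMeasure (expMeasure (1:ℝ)) := isProbabilityMeasure_expMeasure one_pos
  have hIic : expMeasure (1:ℝ) (Iic 0) = 0 := by
    rw [expMeasure_Iic one_pos]; simp
  have := measure_compl (μ := expMeasure (1:ℝ)) measurableSet_Iic (measure_ne_top _ (Iic 0))
  rw [compl_Iic, hIic] at this
  simpa using this

lemma integrable_log_one_add {c : ℝ} (hc : 0 ≤ c) :
    Integrable (fun y : ℝ => Real.log (1 + c * y)) (expMeasure 1) := by
  rw [expMeasure_eq_withDensity,
    integrable_withDensity_iff (measurable_expPDF 1)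
      (Filter.Eventually.of_forall fun _ => ENNReal.ofReal_lt_top)]
  have hbound : Integrable ((Ici (0:ℝ)).indicator fun y => 2 * c * rexp (-(2⁻¹ * y))) := by
    have hb : IntegrableOn (fun y : ℝ => 2 * c * rexp (-(2⁻¹ * y))) (Ioi (0:ℝ)) := by
      have := (exp_neg_integrableOn_Ioi 0 (by norm_num : (0:ℝ) < 2⁻¹)).const_mul (2 * c)
      simpa [neg_mul, IntegrableOn] using this
    exact (Iff.mpr integrableOn_Ici_iff_integrableOn_Ioi hb).integrable_indicator measurableSet_Ici
  refine Integrable.mono' hbound ?_ (Filter.Eventually.of_forall fun y => ?_)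
  · apply Measurable.aestronglyMeasurable
    exact (Real.measurable_log.comp ((measurable_const_mul c).const_add 1)).mul
      ((measurable_expPDF 1).ennreal_toReal)
  · rcases lt_or_ge y 0 with hy | hy
    · rw [exponentialPDF_of_neg hy, indicator_of_notMem (notMem_Ici.mpr hy)]
      simp
    · rw [exponentialPDF_of_nonneg hy, indicator_of_mem (mem_Ici.mpr hy)]
      have h1 : (0:ℝ) < 1 + c * y := by nlinarith
      have hlog0 : 0 ≤ Real.log (1 + c * y) := Real.log_nonneg (by nlinarith)
      have hlog : Real.log (1 + c * y) ≤ c * y := by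
        have := Real.log_le_sub_one_of_pos h1
        linarith
      have hpdf : (ENNReal.ofReal (1 * rexp (-(1 * y)))).toReal = rexp (-y) := by
        rw [ENNReal.toReal_ofReal (by positivity)]; ring_nf
      rw [hpdf, Real.norm_eq_abs, abs_mul, abs_of_nonneg hlog0, abs_of_nonneg (exp_pos _).le]
      have hexp : y * rexp (-y) ≤ 2 * rexp (-(2⁻¹ * y)) := by
        have h2 : y / 2 + 1 ≤ rexp (y / 2) := Real.add_one_le_exp _
        have h3 : rexp (-y) = rexp (-(2⁻¹ * y)) / rexp (2⁻¹ * y) := by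
          rw [← Real.exp_sub]; ring_nf
        have h4 : 0 < rexp (2⁻¹ * y) := exp_pos _
        have h5 : y ≤ 2 * rexp (2⁻¹ * y) := by
          have : y / 2 ≤ rexp (y / 2) := by linarith
          rw [show (2:ℝ)⁻¹ * y = y / 2 by ring]
          linarith
        calc y * rexp (-y) = y * (rexp (-(2⁻¹ * y)) / rexp (2⁻¹ * y)) := by rw [h3]
          _ ≤ 2 * rexp (2⁻¹ * y) * (rexp (-(2⁻¹ * y)) / rexp (2⁻¹ * y)) := by
              apply mul_le_mul_of_nonneg_right h5 (by positivity)
          _ = 2 * rexp (-(2⁻¹ * y)) := by field_simp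
      calc Real.log (1 + c * y) * rexp (-y) ≤ (c * y) * rexp (-y) :=
            mul_le_mul_of_nonneg_right hlog (exp_pos _).le
        _ = c * (y * rexp (-y)) := by ring
        _ ≤ c * (2 * rexp (-(2⁻¹ * y))) := mul_le_mul_of_nonneg_left hexp hc
        _ = 2 * c * rexp (-(2⁻¹ * y)) := by ring

/-- If `h_M, h_E` are independent exponential random variables with means
`γ̄_M, γ̄_E`, then for every `P̄ > 0` the receiver-CSI-only secrecy rate
`R = E[log(1+h_M P̄)] − E[log(1+h_E P̄)]` is positive if `γ̄_M > γ̄_E` and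
nonpositive if `γ̄_M ≤ γ̄_E`; consequently `[R]⁺ = 0` whenever `γ̄_E ≥ γ̄_M`. -/
theorem receiver_csi_rate_sign {Ω : Type*} [MeasureSpace Ω] [IsProbabilityMeasure (ℙ : Measure Ω)]
    (hM hE : Ω → ℝ) (γM γE Pbar : ℝ) (hγM : 0 < γM) (hγE : 0 < γE) (hPbar : 0 < Pbar)
    (hindep : IndepFun hM hE)
    (hlawM : Measure.map hM ℙ = expMeasure (1/γM))
    (hlawE : Measure.map hE ℙ = expMeasure (1/γE))
    (R : ℝ)
    (hR : R = (∫ ω, Real.log (1 + hM ω * Pbar)) - ∫ ω, Real.log (1 + hE ω * Pbar)) :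
    (γE < γM → 0 < R) ∧ (γM ≤ γE → R ≤ 0) ∧ (γM ≤ γE → max R 0 = 0) := by
  have gmeas : Measurable (fun x : ℝ => Real.log (1 + x * Pbar)) :=
    Real.measurable_log.comp ((measurable_mul_const Pbar).const_add 1)
  have haem : ∀ (h : Ω → ℝ) (γ : ℝ), 0 < γ → Measure.map h ℙ = expMeasure (1/γ) →
      AEMeasurable h ℙ := by
    intro h γ hγ hlaw
    by_contra hc
    rw [Measure.map_of_not_aemeasurable hc] at hlaw
    haveI := isProbabilityMeasure_expMeasure (r := 1/γ) (by positivity)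
    have h1 : (expMeasure (1/γ)) univ = 1 := measure_univ
    rw [← hlaw] at h1
    simp at h1
  have key : ∀ (h : Ω → ℝ) (γ : ℝ), 0 < γ → Measure.map h ℙ = expMeasure (1/γ) →
      ∫ ω, Real.log (1 + h ω * Pbar) =
        ∫ y, Real.log (1 + γ * Pbar * y) ∂(expMeasure 1) := by
    intro h γ hγ hlaw
    rw [← integral_map (haem h γ hγ hlaw) gmeas.aestronglyMeasurable, hlaw,
      ← map_mul_expMeasure hγ,
      integral_map (measurable_const_mul γ).aemeasurable gmeas.aestronglyMeasurable]
    congr 1; funext y; congr 1; ring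
  have hEM := key hM γM hγM hlawM
  have hEE := key hE γE hγE hlawE
  have hintM : Integrable (fun y : ℝ => Real.log (1 + γM * Pbar * y)) (expMeasure 1) :=
    integrable_log_one_add (by positivity)
  have hintE : Integrable (fun y : ℝ => Real.log (1 + γE * Pbar * y)) (expMeasure 1) :=
    integrable_log_one_add (by positivity)
  refine ⟨?_, ?_, ?_⟩
  · -- strict positivity
    intro hlt
    have hnn : 0 ≤ᵐ[expMeasure (1:ℝ)]
        fun y => Real.log (1 + γM * Pbar * y) - Real.log (1 + γE * Pbar * y) := by
      filter_upwards [ae_nonneg_expMeasure] with y hy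
      have h1 : (0:ℝ) < 1 + γE * Pbar * y := by nlinarith [mul_nonneg (mul_nonneg hγE.le hPbar.le) hy]
      have h2 : 1 + γE * Pbar * y ≤ 1 + γM * Pbar * y := by nlinarith [mul_nonneg (mul_nonneg (sub_nonneg.mpr hlt.le) hPbar.le) hy]
      simp only [Pi.zero_apply, sub_nonneg]
      exact Real.log_le_log h1 h2
    have hpos : 0 < ∫ y, (Real.log (1 + γM * Pbar * y) - Real.log (1 + γE * Pbar * y))
        ∂(expMeasure 1) := by
      rw [integral_pos_iff_support_of_nonneg_ae hnn (hintM.sub hintE)]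
      refine lt_of_lt_of_le ?_ (measure_mono (s := Ioi (0:ℝ)) ?_)
      · rw [expMeasure_Ioi_zero]; norm_num
      · intro y hy
        have hy0 : (0:ℝ) < y := hy
        have h1 : (0:ℝ) < 1 + γE * Pbar * y := by nlinarith [mul_nonneg (mul_nonneg hγE.le hPbar.le) hy0.le]
        have h2 : 1 + γE * Pbar * y < 1 + γM * Pbar * y := by nlinarith [mul_pos (mul_pos (sub_pos.mpr hlt) hPbar) hy0]
        have := Real.log_lt_log h1 h2
        simp only [Function.mem_support]
        intro hcon
        have : Real.log (1 + γM * Pbar * y) = Real.log (1 + γE * Pbar * y) := by linarith [sub_eq_zero.mp hcon]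
        linarith [Real.log_lt_log h1 h2]
    rw [integral_sub hintM hintE] at hpos
    rw [hR, hEM, hEE]
    linarith
  · -- nonpositivity
    intro hle
    have hmono : (fun y : ℝ => Real.log (1 + γM * Pbar * y)) ≤ᵐ[expMeasure (1:ℝ)]
        fun y => Real.log (1 + γE * Pbar * y) := by
      filter_upwards [ae_nonneg_expMeasure] with y hy
      have h1 : (0:ℝ) < 1 + γM * Pbar * y := by nlinarith [mul_nonneg (mul_nonneg hγM.le hPbar.le) hy]
      have h2 : 1 + γM * Pbar * y ≤ 1 + γE * Pbar * y := by nlinarith [mul_nonneg (mul_nonneg (sub_nonneg.mpr hle) hPbar.le) hy]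
      exact Real.log_le_log h1 h2
    have := integral_mono_ae hintM hintE hmono
    rw [hR, hEM, hEE]
    linarith
  · intro hle
    have hmono : (fun y : ℝ => Real.log (1 + γM * Pbar * y)) ≤ᵐ[expMeasure (1:ℝ)]
        fun y => Real.log (1 + γE * Pbar * y) := by
      filter_upwards [ae_nonneg_expMeasure] with y hy
      have h1 : (0:ℝ) < 1 + γM * Pbar * y := by nlinarith [mul_nonneg (mul_nonneg hγM.le hPbar.le) hy]
      have h2 : 1 + γM * Pbar * y ≤ 1 + γE * Pbar * y := by nlinarith [mul_nonneg (mul_nonneg (sub_nonneg.mpr hle) hPbar.le) hy]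
      exact Real.log_le_log h1 h2
    have := integral_mono_ae hintM hintE hmono
    have hR0 : R ≤ 0 := by rw [hR, hEM, hEE]; linarith
    exact max_eq_right hR0
end

section
/- Combining the monotone limit and the upper bound: if h_M, h_E are independent with continuous bounded densities and E[h_M] < ∞, then the on/off constant-power scheme with threshold τ = 0 achieves, in the limit P̄ → ∞, the rate E[1_{h_M>h_E}·log(h_M/h_E)], which equals the P̄ → ∞ limit of the full-CSI secrecy capacity; i.e., lim_{P̄→∞} E[1_{h_M>h_E}·log((1/P̄+h_M)/(1/P̄+h_E))] = sup_{P̄} C_s^{(F)}(P̄) = E[1_{h_M>h_E}·log(h_M/h_E)]. -/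
open MeasureTheory ProbabilityTheory

section AuxOnOff
open Real Set

-- a.e. positivity from law
lemma aux_ae_pos {Ω : Type*} [MeasureSpace Ω] (Y : Ω → ℝ) (g : ℝ → ℝ)
    (hYmeas : Measurable Y) (hg_supp : ∀ x < (0:ℝ), g x = 0)
    (hlawY : Measure.map Y ℙ = volume.withDensity (fun x => ENNReal.ofReal (g x))) :
    ∀ᵐ ω, 0 < Y ω := by
  have h0 : (Measure.map Y ℙ) (Set.Iic 0) = 0 := by
    rw [hlawY, withDensity_apply _ measurableSet_Iic]
    have h1 : ∀ᵐ x ∂(volume.restrict (Set.Iic (0:ℝ))), x ≠ 0 :=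
      ae_restrict_of_ae (by
        have : (volume : Measure ℝ) {(0:ℝ)} = 0 := measure_singleton 0
        simpa [ae_iff] using this)
    have h2 : ∀ᵐ x ∂(volume.restrict (Set.Iic (0:ℝ))), x ∈ Set.Iic (0:ℝ) :=
      ae_restrict_mem measurableSet_Iic
    have : ∀ᵐ x ∂(volume.restrict (Set.Iic (0:ℝ))), ENNReal.ofReal (g x) = 0 := by
      filter_upwards [h1, h2] with x hx hx'
      rw [hg_supp x (lt_of_le_of_ne hx' hx)]; simp
    rw [lintegral_congr_ae this]; simp
  have hpre : ℙ (Y ⁻¹' Set.Iic (0:ℝ)) = 0 := by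
    rw [← Measure.map_apply hYmeas measurableSet_Iic]; exact h0
  rw [ae_iff]
  convert hpre using 2
  ext ω; simp [Set.mem_Iic, not_lt]

-- integrability of max 0 (-log Y)
lemma aux_int_neg_log {Ω : Type*} [MeasureSpace Ω] [IsProbabilityMeasure (ℙ : Measure Ω)]
    (Y : Ω → ℝ) (g : ℝ → ℝ) (hYmeas : Measurable Y) (hg_cont : Continuous g)
    (hg_bdd : ∃ C, ∀ x, g x ≤ C) (hg_nonneg : ∀ x, 0 ≤ g x)
    (hg_supp : ∀ x < (0:ℝ), g x = 0)
    (hlawY : Measure.map Y ℙ = volume.withDensity (fun x => ENNReal.ofReal (g x))) :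
    Integrable (fun ω => max 0 (-Real.log (Y ω))) (ℙ : Measure Ω) := by
  obtain ⟨C, hC⟩ := hg_bdd
  have hC0 : 0 ≤ C := le_trans (hg_nonneg 0) (hC 0)
  set φ : ℝ → ℝ := fun y => max 0 (-Real.log y) with hφdef
  have hφmeas : Measurable φ := measurable_const.max Real.measurable_log.neg
  have hφnn : ∀ y, 0 ≤ φ y := fun y => le_max_left _ _
  -- bound on (0,1)
  have hφle : ∀ y : ℝ, 0 < y → φ y ≤ 2 * y ^ (-(2⁻¹) : ℝ) := by
    intro y hy
    have h1 : Real.log (y ^ (-(2⁻¹) : ℝ)) ≤ y ^ (-(2⁻¹) : ℝ) - 1 :=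
      Real.log_le_sub_one_of_pos (Real.rpow_pos_of_pos hy _)
    rw [Real.log_rpow hy] at h1
    have h2 : (0:ℝ) < y ^ (-(2⁻¹) : ℝ) := Real.rpow_pos_of_pos hy _
    apply max_le (by positivity)
    nlinarith [h1, h2]
  -- F := φ * g supported in Ioo 0 1
  set F : ℝ → ℝ := fun y => φ y * g y with hFdef
  have hFsupp : Function.support F ⊆ Set.Ioo (0:ℝ) 1 := by
    intro y hy
    by_contra hmem
    apply hy
    simp only [Set.mem_Ioo, not_and_or, not_lt] at hmem
    rcases hmem with h | h
    · rcases lt_or_eq_of_le h with h' | h'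
      · simp [hFdef, hg_supp y h']
      · subst h'
        have : φ 0 = 0 := by simp [hφdef, Real.log_zero]
        simp [hFdef, this]
    · have : 0 ≤ Real.log y := Real.log_nonneg h
      simp [hFdef, hφdef, max_eq_left, neg_nonpos.mpr this]
  have hFmeas : Measurable F := hφmeas.mul hg_cont.measurable
  have hIntOn : IntegrableOn F (Set.Ioo 0 1) volume := by
    have hrpow : IntegrableOn (fun y : ℝ => C * (2 * y ^ (-(2⁻¹) : ℝ))) (Set.Ioo 0 1) volume := by
      have := (intervalIntegral.intervalIntegrable_rpow' (a := 0) (b := 1)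
        (r := (-(2⁻¹) : ℝ)) (by norm_num)).1
      exact ((this.mono_set Set.Ioo_subset_Ioc_self).const_mul 2).const_mul C
    apply Integrable.mono' hrpow (hFmeas.aestronglyMeasurable.restrict)
    filter_upwards [ae_restrict_mem measurableSet_Ioo] with y hy
    have hy0 : 0 < y := hy.1
    have : |F y| = F y := abs_of_nonneg (mul_nonneg (hφnn y) (hg_nonneg y))
    rw [Real.norm_eq_abs, this]
    calc F y ≤ C * φ y := by
          rw [hFdef]; simp only; rw [mul_comm C (φ y)]
          exact mul_le_mul_of_nonneg_left (hC y) (hφnn y)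
      _ ≤ C * (2 * y ^ (-(2⁻¹) : ℝ)) :=
          mul_le_mul_of_nonneg_left (hφle y hy0) hC0
  have hFint : Integrable F volume := by
    have : Integrable ((Set.Ioo (0:ℝ) 1).indicator F) volume :=
      (integrable_indicator_iff measurableSet_Ioo).mpr hIntOn
    rwa [Set.indicator_eq_self.mpr hFsupp] at this
  -- transfer through withDensity and law
  have hwd : Integrable φ (volume.withDensity (fun x => ENNReal.ofReal (g x))) := by
    rw [integrable_withDensity_iff hg_cont.measurable.ennreal_ofReal (by
      filter_upwards with x; exact ENNReal.ofReal_lt_top)]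
    have : (fun x => φ x * (ENNReal.ofReal (g x)).toReal) = F := by
      funext x; rw [ENNReal.toReal_ofReal (hg_nonneg x)]
    rwa [this]
  have := Integrable.comp_aemeasurable (hlawY ▸ hwd) hYmeas.aemeasurable
  exact this
end AuxOnOff

/-- If `h_M, h_E` are independent with continuous bounded densities and
`E[h_M] < ∞`, the on/off constant-power scheme with threshold `τ = 0` achieves,
in the limit `P̄ → ∞`, the rate `E[1_{h_M>h_E}·log(h_M/h_E)]`, which equals the
supremum over `P̄` of the full-CSI secrecy capacity `C_s^{(F)}(P̄)`. -/
theorem onoff_asymptotically_optimal {Ω : Type*} [MeasureSpace Ω]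
    [IsProbabilityMeasure (ℙ : Measure Ω)]
    (X Y : Ω → ℝ) (f g : ℝ → ℝ)
    (hXmeas : Measurable X) (hYmeas : Measurable Y)
    (hf_cont : Continuous f) (hg_cont : Continuous g)
    (hf_bdd : ∃ C, ∀ x, f x ≤ C) (hg_bdd : ∃ C, ∀ x, g x ≤ C)
    (hf_nonneg : ∀ x, 0 ≤ f x) (hg_nonneg : ∀ x, 0 ≤ g x)
    (hf_supp : ∀ x < (0:ℝ), f x = 0) (hg_supp : ∀ x < (0:ℝ), g x = 0)
    (hlawX : Measure.map X ℙ = volume.withDensity (fun x => ENNReal.ofReal (f x)))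
    (hlawY : Measure.map Y ℙ = volume.withDensity (fun x => ENNReal.ofReal (g x)))
    (hindep : IndepFun X Y)
    (hXint : Integrable X (ℙ : Measure Ω))
    (Cs : ℝ → ℝ)
    (hCs : ∀ Pbar : ℝ, Cs Pbar = sSup {r : ℝ | ∃ p : ℝ → ℝ → ℝ,
      Measurable (Function.uncurry p) ∧ (∀ a b, 0 ≤ p a b) ∧
      (∫ ω, p (X ω) (Y ω)) ≤ Pbar ∧
      r = ∫ ω, if Y ω < X ω then
          Real.log (1 + X ω * p (X ω) (Y ω)) - Real.log (1 + Y ω * p (X ω) (Y ω))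
        else 0}) :
    Filter.Tendsto
      (fun Pbar : ℝ =>
        ∫ ω, if Y ω < X ω then Real.log ((1/Pbar + X ω) / (1/Pbar + Y ω)) else 0)
      Filter.atTop
      (nhds (∫ ω, if Y ω < X ω then Real.log (X ω / Y ω) else 0)) ∧
    (⨆ Pbar : Set.Ioi (0:ℝ), Cs Pbar)
      = ∫ ω, if Y ω < X ω then Real.log (X ω / Y ω) else 0 := by
  classical
  have hY0 : ∀ᵐ ω, 0 < Y ω := aux_ae_pos Y g hYmeas hg_supp hlawY
  have hX0 : ∀ᵐ ω, 0 < X ω := aux_ae_pos X f hXmeas hf_supp hlawX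
  have hφY : Integrable (fun ω => max 0 (-Real.log (Y ω))) (ℙ : Measure Ω) :=
    aux_int_neg_log Y g hYmeas hg_cont hg_bdd hg_nonneg hg_supp hlawY
  have hlogX : Integrable (fun ω => max 0 (Real.log (X ω))) (ℙ : Measure Ω) := by
    apply hXint.mono'
      (measurable_const.max (Real.measurable_log.comp hXmeas)).aestronglyMeasurable
    filter_upwards [hX0] with ω hx
    rw [Real.norm_eq_abs, abs_of_nonneg (le_max_left _ _)]
    refine max_le hx.le ?_
    show Real.log (X ω) ≤ X ω
    linarith [Real.log_le_sub_one_of_pos hx]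
  set B : Ω → ℝ := fun ω => max 0 (Real.log (X ω)) + max 0 (-Real.log (Y ω)) with hBdef
  have hBint : Integrable B (ℙ : Measure Ω) := hlogX.add hφY
  set h : Ω → ℝ := fun ω => if Y ω < X ω then Real.log (X ω / Y ω) else 0 with hhdef
  have hhmeas : Measurable h :=
    Measurable.ite (measurableSet_lt hYmeas hXmeas)
      (Real.measurable_log.comp (hXmeas.div hYmeas)) measurable_const
  have hhboundae : ∀ᵐ ω, ‖h ω‖ ≤ B ω ∧ 0 ≤ h ω := by
    filter_upwards [hX0, hY0] with ω hx hy
    by_cases hlt : Y ω < X ω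
    · have h1 : (1:ℝ) ≤ X ω / Y ω := (one_le_div hy).mpr hlt.le
      have h2 : 0 ≤ Real.log (X ω / Y ω) := Real.log_nonneg h1
      have h3 : Real.log (X ω / Y ω) = Real.log (X ω) - Real.log (Y ω) :=
        Real.log_div hx.ne' hy.ne'
      constructor
      · rw [h3] at h2
        simp only [hhdef, if_pos hlt, h3, Real.norm_eq_abs, abs_of_nonneg h2, hBdef]
        linarith [le_max_right (0:ℝ) (Real.log (X ω)), le_max_right (0:ℝ) (-Real.log (Y ω))]
      · simpa [hhdef, if_pos hlt] using h2
    · have hB0 : 0 ≤ B ω :=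
        add_nonneg (le_max_left _ _) (le_max_left _ _)
      constructor
      · simpa [hhdef, if_neg hlt] using hB0
      · simp [hhdef, if_neg hlt]
  have hh_int : Integrable h (ℙ : Measure Ω) :=
    hBint.mono' hhmeas.aestronglyMeasurable
      (by filter_upwards [hhboundae] with ω hω; exact hω.1)
  have key : Filter.Tendsto
      (fun Pbar : ℝ =>
        ∫ ω, if Y ω < X ω then Real.log ((1/Pbar + X ω) / (1/Pbar + Y ω)) else 0)
      Filter.atTop (nhds (∫ ω, h ω)) := by
    apply tendsto_integral_filter_of_dominated_convergence h
    · filter_upwards with P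
      exact (Measurable.ite (measurableSet_lt hYmeas hXmeas)
        (Real.measurable_log.comp
          ((measurable_const.add hXmeas).div (measurable_const.add hYmeas)))
        measurable_const).aestronglyMeasurable
    · filter_upwards [Filter.eventually_ge_atTop (1:ℝ)] with P hP
      filter_upwards [hX0, hY0] with ω hx hy
      by_cases hlt : Y ω < X ω
      · have hP0 : (0:ℝ) < P := lt_of_lt_of_le one_pos hP
        have hd : 0 < 1/P + Y ω := by positivity
        have hn : 0 < 1/P + X ω := by positivity
        have h1 : (1:ℝ) ≤ (1/P + X ω)/(1/P + Y ω) := (one_le_div hd).mpr (by linarith)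
        simp only [hhdef, if_pos hlt]
        rw [Real.norm_eq_abs, abs_of_nonneg (Real.log_nonneg h1)]
        apply Real.log_le_log (by positivity)
        rw [div_le_div_iff₀ hd hy]
        have h5 : 0 ≤ (X ω - Y ω) * (1/P) := mul_nonneg (by linarith) (by positivity)
        nlinarith [h5]
      · simp [hhdef, if_neg hlt]
    · exact hh_int
    · filter_upwards [hX0, hY0] with ω hx hy
      by_cases hlt : Y ω < X ω
      · simp only [hhdef, if_pos hlt]
        have h1 : Filter.Tendsto (fun P : ℝ => 1/P) Filter.atTop (nhds 0) := by
          simpa using tendsto_inv_atTop_zero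
        have h2 : Filter.Tendsto (fun P : ℝ => (1/P + X ω)/(1/P + Y ω))
            Filter.atTop (nhds (X ω / Y ω)) := by
          have := (h1.add (tendsto_const_nhds (x := X ω))).div
            (h1.add (tendsto_const_nhds (x := Y ω))) (by simpa using hy.ne')
          simpa [Pi.div_def] using this
        have hpos : (0:ℝ) < X ω / Y ω := div_pos hx hy
        exact (Real.continuousAt_log hpos.ne').tendsto.comp h2
      · simp only [hhdef, if_neg hlt]; exact tendsto_const_nhds
  set L := ∫ ω, h ω with hLdef
  -- each achievable rate is at most L
  have hub : ∀ p : ℝ → ℝ → ℝ, Measurable (Function.uncurry p) → (∀ a b, 0 ≤ p a b) →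
      (∫ ω, if Y ω < X ω then
          Real.log (1 + X ω * p (X ω) (Y ω)) - Real.log (1 + Y ω * p (X ω) (Y ω))
        else 0) ≤ L := by
    intro p hpm hpnn
    set G : Ω → ℝ := fun ω => if Y ω < X ω then
        Real.log (1 + X ω * p (X ω) (Y ω)) - Real.log (1 + Y ω * p (X ω) (Y ω))
      else 0 with hGdef
    have hpmeas : Measurable (fun ω => p (X ω) (Y ω)) := hpm.comp (hXmeas.prodMk hYmeas)
    have hGmeas : Measurable G := Measurable.ite (measurableSet_lt hYmeas hXmeas)
      ((Real.measurable_log.comp (measurable_const.add (hXmeas.mul hpmeas))).sub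
        (Real.measurable_log.comp (measurable_const.add (hYmeas.mul hpmeas))))
      measurable_const
    have hGle : ∀ᵐ ω, G ω ≤ h ω ∧ 0 ≤ G ω := by
      filter_upwards [hX0, hY0] with ω hx hy
      by_cases hlt : Y ω < X ω
      · set q := p (X ω) (Y ω) with hq
        have hq0 : 0 ≤ q := hpnn _ _
        have hA : (0:ℝ) < 1 + X ω * q := by nlinarith
        have hB2 : (0:ℝ) < 1 + Y ω * q := by nlinarith
        have e1 : Real.log ((1 + X ω * q) * Y ω) ≤ Real.log (X ω * (1 + Y ω * q)) := by
          apply Real.log_le_log (by positivity); nlinarith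
        rw [Real.log_mul hA.ne' hy.ne', Real.log_mul hx.ne' hB2.ne'] at e1
        have e2 : Real.log (1 + Y ω * q) ≤ Real.log (1 + X ω * q) := by
          apply Real.log_le_log hB2; nlinarith
        constructor
        · simp only [hGdef, hhdef, if_pos hlt, Real.log_div hx.ne' hy.ne', ← hq]
          linarith
        · simp only [hGdef, if_pos hlt, ← hq]; linarith
      · constructor <;> simp [hGdef, hhdef, if_neg hlt]
    have hGint : Integrable G (ℙ : Measure Ω) := by
      apply hh_int.mono' hGmeas.aestronglyMeasurable
      filter_upwards [hGle] with ω hω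
      rw [Real.norm_eq_abs, abs_of_nonneg hω.2]; exact hω.1
    exact integral_mono_ae hGint hh_int
      (by filter_upwards [hGle] with ω hω; exact hω.1)
  have hCsle : ∀ P : ℝ, 0 < P → Cs P ≤ L := by
    intro P hP
    rw [hCs]
    apply csSup_le
    · refine ⟨0, ⟨fun _ _ => 0, measurable_const, fun _ _ => le_refl 0, by simpa using hP.le, by simp⟩⟩
    · rintro r ⟨p, hpm, hpnn, -, rfl⟩
      exact hub p hpm hpnn
  have hCsge : ∀ P : ℝ, 0 < P →
      (∫ ω, if Y ω < X ω then Real.log ((1/P + X ω) / (1/P + Y ω)) else 0) ≤ Cs P := by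
    intro P hP
    have hPne : P ≠ 0 := hP.ne'
    rw [hCs]
    apply le_csSup
    · refine ⟨L, ?_⟩
      rintro r ⟨p, hpm, hpnn, -, rfl⟩
      exact hub p hpm hpnn
    · refine ⟨fun _ _ => P, measurable_const, fun _ _ => hP.le, by simp, ?_⟩
      apply integral_congr_ae
      filter_upwards [hX0, hY0] with ω hx hy
      by_cases hlt : Y ω < X ω
      · simp only [if_pos hlt]
        have e : (1/P + X ω)/(1/P + Y ω) = (1 + X ω * P)/(1 + Y ω * P) := by
          rw [div_eq_div_iff (by positivity) (by positivity)]
          field_simp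
          try ring
        have hA : (0:ℝ) < 1 + X ω * P := by nlinarith
        have hB2 : (0:ℝ) < 1 + Y ω * P := by nlinarith
        rw [e, Real.log_div hA.ne' hB2.ne']
      · simp [if_neg hlt]
  haveI : Nonempty (Set.Ioi (0:ℝ)) := ⟨⟨1, by norm_num⟩⟩
  have hBdd : BddAbove (Set.range fun P : Set.Ioi (0:ℝ) => Cs P) := by
    refine ⟨L, ?_⟩
    rintro r ⟨⟨P, hP⟩, rfl⟩
    exact hCsle P hP
  refine ⟨key, le_antisymm (ciSup_le fun P => hCsle P P.2) ?_⟩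
  apply le_of_tendsto key
  filter_upwards [Filter.eventually_gt_atTop (0:ℝ)] with P hP
  exact (hCsge P hP).trans (le_ciSup hBdd ⟨P, hP⟩)
end

section
/- For fixed gains h_M > h_E > 0 and any λ > 0, the map P ↦ log(1+h_M P) − log(1+h_E P) − λP attains its maximum over P ≥ 0 at [P*]⁺ where P* = (1/2)[√((1/h_E − 1/h_M)² + (4/λ)(1/h_E − 1/h_M)) − (1/h_M + 1/h_E)], and the maximum value is nonnegative. -/
/-- For fixed gains `h_M > h_E > 0` and any `λ > 0`, the map
`P ↦ log(1+h_M P) − log(1+h_E P) − λP` attains its maximum over `P ≥ 0`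
at `[P*]⁺` with `P* = (1/2)[√((1/h_E − 1/h_M)² + (4/λ)(1/h_E − 1/h_M)) − (1/h_M + 1/h_E)]`,
and the maximum value is nonnegative. -/
theorem lagrangian_maximized_at_water_filling (hM hE lam : ℝ)
    (hE_pos : 0 < hE) (h_lt : hE < hM) (hlam : 0 < lam)
    (Pstar : ℝ)
    (hPdef : Pstar = (1/2) * (Real.sqrt ((1/hE - 1/hM)^2 + (4/lam) * (1/hE - 1/hM))
      - (1/hM + 1/hE))) :
    (∀ P ∈ Set.Ici (0 : ℝ),
        Real.log (1 + hM * P) - Real.log (1 + hE * P) - lam * P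
          ≤ Real.log (1 + hM * max Pstar 0) - Real.log (1 + hE * max Pstar 0)
            - lam * max Pstar 0) ∧
    0 ≤ Real.log (1 + hM * max Pstar 0) - Real.log (1 + hE * max Pstar 0)
        - lam * max Pstar 0 := by
  have hM_pos : 0 < hM := hE_pos.trans h_lt
  have hM0 : hM ≠ 0 := hM_pos.ne'
  have hE0 : hE ≠ 0 := hE_pos.ne'
  have hlam0 : lam ≠ 0 := hlam.ne'
  have ha_pos : 0 < 1/hE - 1/hM := by
    rw [sub_pos]
    exact one_div_lt_one_div_of_lt hE_pos h_lt
  have hD_nonneg : 0 ≤ (1/hE - 1/hM)^2 + (4/lam) * (1/hE - 1/hM) := by positivity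
  set s : ℝ := Real.sqrt ((1/hE - 1/hM)^2 + (4/lam) * (1/hE - 1/hM)) with hs
  have hs2 : s^2 = (1/hE - 1/hM)^2 + (4/lam) * (1/hE - 1/hM) := Real.sq_sqrt hD_nonneg
  have hs_nonneg : 0 ≤ s := Real.sqrt_nonneg _
  set b : ℝ := 1/hM + 1/hE with hb
  have hb_pos : 0 < b := by rw [hb]; positivity
  clear_value s b
  -- key polynomial identity
  have key : ∀ x : ℝ, lam*hM*hE*(x - Pstar)*(x + Pstar + b) =
      lam*(1+hM*x)*(1+hE*x) - (hM - hE) := by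
    intro x
    rw [hPdef, hb]
    have h := hs2
    field_simp at h ⊢
    linear_combination (-1) * h
  have hPb : 0 ≤ Pstar + b := by
    have : Pstar + b = (s + b)/2 := by rw [hPdef]; ring
    rw [this]
    linarith [hs_nonneg, hb_pos]
  set f : ℝ → ℝ := fun P => Real.log (1 + hM * P) - Real.log (1 + hE * P) - lam * P with hf
  have hderiv : ∀ x : ℝ, 0 ≤ x →
      HasDerivAt f (hM/(1+hM*x) - hE/(1+hE*x) - lam) x := by
    intro x hx
    have h1 : 0 < 1 + hM * x := by have := mul_nonneg hM_pos.le hx; linarith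
    have h2 : 0 < 1 + hE * x := by have := mul_nonneg hE_pos.le hx; linarith
    have d1 : HasDerivAt (fun P : ℝ => 1 + hM * P) hM x := by
      simpa using ((hasDerivAt_id x).const_mul hM).const_add 1
    have d2 : HasDerivAt (fun P : ℝ => 1 + hE * P) hE x := by
      simpa using ((hasDerivAt_id x).const_mul hE).const_add 1
    have d3 : HasDerivAt (fun P : ℝ => lam * P) lam x := by
      simpa using (hasDerivAt_id x).const_mul lam
    exact ((d1.log h1.ne').sub (d2.log h2.ne')).sub d3
  set Q : ℝ := max Pstar 0 with hQ
  have hQ0 : 0 ≤ Q := le_max_right _ _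
  have hPQ : Pstar ≤ Q := le_max_left _ _
  clear_value Q
  -- derivative rewritten as a ratio
  have dform : ∀ x : ℝ, 0 ≤ x →
      hM/(1+hM*x) - hE/(1+hE*x) - lam
        = (lam*hM*hE*(Pstar - x)*(x + Pstar + b)) / ((1+hM*x)*(1+hE*x)) := by
    intro x hx
    have h1 : 0 < 1 + hM * x := by have := mul_nonneg hM_pos.le hx; linarith
    have h2 : 0 < 1 + hE * x := by have := mul_nonneg hE_pos.le hx; linarith
    have hratio : hM/(1+hM*x) - hE/(1+hE*x) - lam
        = ((hM - hE) - lam*(1+hM*x)*(1+hE*x)) / ((1+hM*x)*(1+hE*x)) := by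
      field_simp
      ring
    rw [hratio]
    congr 1
    linear_combination key x
  have cont : ContinuousOn f (Set.Ici (0:ℝ)) := fun x hx =>
    (hderiv x hx).continuousAt.continuousWithinAt
  have mono : MonotoneOn f (Set.Icc 0 Q) := by
    apply monotoneOn_of_deriv_nonneg (convex_Icc _ _)
      (cont.mono Set.Icc_subset_Ici_self)
    · intro x hx
      rw [interior_Icc] at hx
      exact ((hderiv x hx.1.le).differentiableAt).differentiableWithinAt
    · intro x hx
      rw [interior_Icc] at hx
      obtain ⟨hx0, hxQ⟩ := hx
      have hQpos : 0 < Q := hx0.trans hxQ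
      have hP0 : 0 < Pstar := by
        by_contra hc
        push_neg at hc
        rw [hQ, max_eq_right hc] at hQpos
        exact lt_irrefl _ hQpos
      have hxP : x < Pstar := by
        rw [hQ, max_eq_left hP0.le] at hxQ
        exact hxQ
      rw [(hderiv x hx0.le).deriv, dform x hx0.le]
      have h1 : 0 < 1 + hM * x := by have := mul_nonneg hM_pos.le hx0.le; linarith
      have h2 : 0 < 1 + hE * x := by have := mul_nonneg hE_pos.le hx0.le; linarith
      apply div_nonneg _ (by positivity)
      have hA : 0 ≤ lam*hM*hE*(Pstar - x) := by
        have : 0 ≤ Pstar - x := by linarith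
        positivity
      have hB : 0 ≤ x + Pstar + b := by linarith
      exact mul_nonneg hA hB
  have anti : AntitoneOn f (Set.Ici Q) := by
    apply antitoneOn_of_deriv_nonpos (convex_Ici _)
      (cont.mono (Set.Ici_subset_Ici.mpr hQ0))
    · intro x hx
      rw [interior_Ici] at hx
      exact ((hderiv x (hQ0.trans hx.le)).differentiableAt).differentiableWithinAt
    · intro x hx
      rw [interior_Ici] at hx
      have hx0 : 0 ≤ x := hQ0.trans hx.le
      have hxP : Pstar < x := lt_of_le_of_lt hPQ hx
      rw [(hderiv x hx0).deriv, dform x hx0]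
      have h1 : 0 < 1 + hM * x := by have := mul_nonneg hM_pos.le hx0; linarith
      have h2 : 0 < 1 + hE * x := by have := mul_nonneg hE_pos.le hx0; linarith
      apply div_nonpos_of_nonpos_of_nonneg _ (by positivity)
      have hA : lam*hM*hE*(Pstar - x) ≤ 0 := by
        have h3 : Pstar - x ≤ 0 := by linarith
        have h4 : 0 < lam*hM*hE := by positivity
        exact mul_nonpos_of_nonneg_of_nonpos h4.le h3
      have hB : 0 ≤ x + Pstar + b := by linarith
      exact mul_nonpos_of_nonpos_of_nonneg hA hB
  have main : ∀ P ∈ Set.Ici (0:ℝ), f P ≤ f Q := by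
    intro P hP
    rcases le_total P Q with h | h
    · exact mono ⟨hP, h⟩ ⟨hQ0, le_refl Q⟩ h
    · exact anti (le_refl Q) h h
  have hf0 : f 0 = 0 := by simp [hf]
  constructor
  · intro P hP
    have := main P hP
    simpa [hf] using this
  · have h0 := main 0 (Set.mem_Ici.mpr le_rfl)
    rw [hf0] at h0
    simpa [hf] using h0
end
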